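/- Let h be an inner function. Then A_hⁿ φ_h = P_{H_h}(zⁿ) for all n ∈ ℕ, where zⁿ denotes the function z ↦ zⁿ in L²_+. Consequently, (A_hⁿ φ_h)_{n∈ℕ} is a Parseval frame for H_h, i.e., ∑_{n∈ℕ} |⟨f, A_hⁿφ_h⟩|² = ‖f‖² for all f ∈ H_h. If moreover H_h is infinite-dimensional, this Parseval frame is overcomplete. -/

import Mathlib

open MeasureTheory AddCircle
noncomputable section

instance : Fact ((0:ℝ) < 1) := ⟨one_pos⟩

section MulCLM

variable {α : Type*} [MeasurableSpace α] {μ : Measure α}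

theorem memℒp_mul_of_ae_bound (φ : α → ℂ) (hm : AEStronglyMeasurable φ μ)
    (hb : ∀ᵐ x ∂μ, ‖φ x‖ ≤ 1) (f : Lp ℂ 2 μ) : MemLp (fun x => φ x * f x) 2 μ := by
  refine MemLp.of_le (Lp.memLp f) (hm.mul (Lp.aestronglyMeasurable f)) ?_
  filter_upwards [hb] with x hx
  calc ‖φ x * f x‖ = ‖φ x‖ * ‖f x‖ := norm_mul _ _
  _ ≤ 1 * ‖f x‖ := by gcongr
  _ = ‖f x‖ := one_mul _

/-- Multiplication by a measurable function bounded by `1` a.e., as a bounded operator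
on `L²(μ)`. -/
def mulCLM (φ : α → ℂ) (hm : AEStronglyMeasurable φ μ) (hb : ∀ᵐ x ∂μ, ‖φ x‖ ≤ 1) :
    Lp ℂ 2 μ →L[ℂ] Lp ℂ 2 μ := by
  refine LinearMap.mkContinuous
    { toFun := fun f => (memℒp_mul_of_ae_bound φ hm hb f).toLp (fun x => φ x * f x)
      map_add' := ?_
      map_smul' := ?_ } 1 ?_
  · intro f g
    refine Lp.ext ?_
    filter_upwards [MemLp.coeFn_toLp (memℒp_mul_of_ae_bound φ hm hb (f + g)),
      MemLp.coeFn_toLp (memℒp_mul_of_ae_bound φ hm hb f),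
      MemLp.coeFn_toLp (memℒp_mul_of_ae_bound φ hm hb g),
      Lp.coeFn_add f g,
      Lp.coeFn_add ((memℒp_mul_of_ae_bound φ hm hb f).toLp _)
        ((memℒp_mul_of_ae_bound φ hm hb g).toLp _)] with x h1 h2 h3 h4 h5
    rw [h1, h5]
    simp only [Pi.add_apply, h2, h3, h4]
    ring
  · intro c f
    refine Lp.ext ?_
    filter_upwards [MemLp.coeFn_toLp (memℒp_mul_of_ae_bound φ hm hb (c • f)),
      MemLp.coeFn_toLp (memℒp_mul_of_ae_bound φ hm hb f), Lp.coeFn_smul c f,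
      Lp.coeFn_smul c ((memℒp_mul_of_ae_bound φ hm hb f).toLp _)] with x h1 h2 h3 h4
    simp only [RingHom.id_apply]
    rw [h1, h4]
    simp only [Pi.smul_apply, h2, h3, smul_eq_mul]
    ring
  · intro f
    simp only [LinearMap.coe_mk, AddHom.coe_mk, one_mul]
    rw [Lp.norm_toLp, Lp.norm_def]
    refine ENNReal.toReal_mono (Lp.eLpNorm_ne_top f) ?_
    refine eLpNorm_mono_ae ?_
    filter_upwards [hb] with x hx
    calc ‖φ x * f x‖ = ‖φ x‖ * ‖f x‖ := norm_mul _ _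
    _ ≤ 1 * ‖f x‖ := by gcongr
    _ = ‖f x‖ := one_mul _

end MulCLM

lemma norm_fourier_apply (n : ℤ) (x : UnitAddCircle) : ‖fourier n x‖ = 1 := by
  rw [fourier_apply]
  exact Circle.norm_coe _

/-- `L² = L²(𝕋)` with respect to the normalized arc-length (Haar) measure. -/
abbrev L2T := Lp ℂ 2 (haarAddCircle : Measure UnitAddCircle)

/-- The Hardy subspace `L²₊` of `L²(𝕋)`: all `f ∈ L²` whose negative Fourier
coefficients vanish. -/
def L2plus : Submodule ℂ L2T where
  carrier := {f : L2T | ∀ n : ℤ, n < 0 → fourierBasis.repr f n = 0}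
  add_mem' := by
    intro f g hf hg n hn
    simp [map_add, hf n hn, hg n hn]
  zero_mem' := by
    intro n hn
    simp
  smul_mem' := by
    intro c f hf n hn
    simp [_root_.map_smul, hf n hn]

lemma isClosed_L2plus : IsClosed (L2plus : Set L2T) := by
  have hset : (L2plus : Set L2T) =
      ⋂ n : {n : ℤ // n < 0}, {f : L2T | fourierBasis.repr f (n : ℤ) = 0} := by
    ext f
    simp only [Set.mem_iInter, Set.mem_setOf_eq, Subtype.forall]
    rfl
  rw [hset]
  refine isClosed_iInter fun n => ?_
  have hcont : Continuous fun f : L2T => fourierBasis.repr f (n : ℤ) := by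
    have : (fun f : L2T => fourierBasis.repr f (n : ℤ)) =
        fun f : L2T => (inner ℂ (fourierBasis (n : ℤ)) f : ℂ) := by
      funext f
      exact fourierBasis.repr_apply_apply f (n : ℤ)
    rw [this]
    exact (innerSL ℂ (fourierBasis (n : ℤ))).continuous
  exact isClosed_eq hcont continuous_const

/-- Multiplication `M_𝕋⁺`-style operator: multiplication by the free variable `z`
on all of `L²(𝕋)`. -/
def Mz : L2T →L[ℂ] L2T :=
  mulCLM (⇑(fourier 1)) ((map_continuous (fourier 1)).aestronglyMeasurable)
    (Filter.Eventually.of_forall fun x => le_of_eq (norm_fourier_apply 1 x))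

/-- Multiplication by (a representative of) `h ∈ L²` with `|h| ≤ 1` a.e., as a bounded
operator on `L²`. -/
def mulByLp (h : L2T) (hb : ∀ᵐ z ∂(haarAddCircle : Measure UnitAddCircle), ‖h z‖ ≤ 1) :
    L2T →L[ℂ] L2T :=
  mulCLM (⇑h) (Lp.aestronglyMeasurable h) hb

/-- The subspace `hL²₊`. -/
def hL2plus (h : L2T) (hb : ∀ᵐ z ∂(haarAddCircle : Measure UnitAddCircle), ‖h z‖ ≤ 1) :
    Submodule ℂ L2T :=
  L2plus.map (mulByLp h hb : L2T →ₗ[ℂ] L2T)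

/-- The model space `H_h = L²₊ ⊖ hL²₊`. -/
def Hh (h : L2T) (hb : ∀ᵐ z ∂(haarAddCircle : Measure UnitAddCircle), ‖h z‖ ≤ 1) :
    Submodule ℂ L2T :=
  L2plus ⊓ (hL2plus h hb)ᗮ

lemma isClosed_Hh (h : L2T) (hb : ∀ᵐ z ∂(haarAddCircle : Measure UnitAddCircle), ‖h z‖ ≤ 1) :
    IsClosed ((Hh h hb : Submodule ℂ L2T) : Set L2T) := by
  have : ((Hh h hb : Submodule ℂ L2T) : Set L2T) =
      (L2plus : Set L2T) ∩ ((hL2plus h hb)ᗮ : Set L2T) := rfl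
  rw [this]
  exact isClosed_L2plus.inter (hL2plus h hb).isClosed_orthogonal

instance completeSpace_Hh (h : L2T)
    (hb : ∀ᵐ z ∂(haarAddCircle : Measure UnitAddCircle), ‖h z‖ ≤ 1) :
    CompleteSpace ↥(Hh h hb) :=
  (isClosed_Hh h hb).completeSpace_coe

/-- The compression `A_h` of `M_𝕋⁺` to `H_h`. -/
def Ah (h : L2T) (hb : ∀ᵐ z ∂(haarAddCircle : Measure UnitAddCircle), ‖h z‖ ≤ 1) :
    ↥(Hh h hb) →L[ℂ] ↥(Hh h hb) :=
  (Hh h hb).orthogonalProjectionOnto ∘L (Mz ∘L (Hh h hb).subtypeL)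

/-- The constant function `1` in `L²(𝕋)`. -/
def oneT : L2T := (memLp_const (1 : ℂ)).toLp _

/-- The vector `φ_h = P_{H_h} 1`. -/
def phih (h : L2T) (hb : ∀ᵐ z ∂(haarAddCircle : Measure UnitAddCircle), ‖h z‖ ≤ 1) :
    ↥(Hh h hb) :=
  (Hh h hb).orthogonalProjectionOnto oneT

/-- A family `(F n)` is a frame for `H`. -/
def IsFrame {I H : Type*} [NormedAddCommGroup H] [InnerProductSpace ℂ H] (F : I → H) : Prop :=
  ∃ A B : ℝ, 0 < A ∧ 0 < B ∧ ∀ f : H,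
    A * ‖f‖ ^ 2 ≤ ∑' n : I, ‖(inner ℂ f (F n) : ℂ)‖ ^ 2 ∧
      ∑' n : I, ‖(inner ℂ f (F n) : ℂ)‖ ^ 2 ≤ B * ‖f‖ ^ 2

/-- `(F n)` is a Riesz basis: the image of an orthonormal basis under a bounded
bijective operator. -/
def IsRieszBasis {I H : Type*} [NormedAddCommGroup H] [InnerProductSpace ℂ H] (F : I → H) : Prop :=
  ∃ (e : HilbertBasis I ℂ H) (V : H ≃L[ℂ] H), ∀ n, F n = V (e n)

section AuxProofs

open Filter Function

local notation "⟪" x ", " y "⟫" => @inner ℂ _ _ x y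

lemma mulCLM_coeFn {α : Type*} [MeasurableSpace α] {μ : Measure α} (φ : α → ℂ)
    (hm : AEStronglyMeasurable φ μ) (hb : ∀ᵐ x ∂μ, ‖φ x‖ ≤ 1) (f : Lp ℂ 2 μ) :
    mulCLM φ hm hb f =ᵐ[μ] fun x => φ x * f x :=
  (memℒp_mul_of_ae_bound φ hm hb f).coeFn_toLp

lemma Mz_coeFn (f : L2T) :
    ⇑(Mz f) =ᵐ[(haarAddCircle : Measure UnitAddCircle)] fun x => fourier 1 x * f x :=
  mulCLM_coeFn _ _ _ f

lemma mulByLp_coeFn (h : L2T) (hb : ∀ᵐ z ∂(haarAddCircle : Measure UnitAddCircle), ‖h z‖ ≤ 1)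
    (f : L2T) : ⇑(mulByLp h hb f) =ᵐ[(haarAddCircle : Measure UnitAddCircle)]
      fun x => h x * f x :=
  mulCLM_coeFn _ _ _ f

lemma Mz_fourierLp (n : ℤ) : Mz (fourierLp 2 n) = fourierLp 2 (n + 1) := by
  refine Lp.ext ?_
  filter_upwards [Mz_coeFn (fourierLp 2 n), coeFn_fourierLp 2 n, coeFn_fourierLp 2 (n + 1)]
    with x h1 h2 h3
  rw [h1, h2, h3, ← fourier_add, add_comm 1 n]

lemma repr_fourierLp (n k : ℤ) :
    fourierBasis.repr (fourierLp 2 n : L2T) k = if k = n then 1 else 0 := by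
  rw [fourierBasis.repr_apply_apply, coe_fourierBasis]
  exact orthonormal_iff_ite.mp orthonormal_fourier k n

lemma fourierLp_mem_L2plus (n : ℕ) : (fourierLp 2 (n : ℤ) : L2T) ∈ L2plus := by
  intro m hm
  rw [repr_fourierLp, if_neg (by omega)]

lemma repr_mulByLp_fourierLp (h : L2T)
    (hb : ∀ᵐ z ∂(haarAddCircle : Measure UnitAddCircle), ‖h z‖ ≤ 1) (n k : ℤ) :
    fourierBasis.repr (mulByLp h hb (fourierLp 2 n) : L2T) k = fourierBasis.repr h (k - n) := by
  rw [fourierBasis.repr_apply_apply, fourierBasis.repr_apply_apply, coe_fourierBasis,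
    MeasureTheory.L2.inner_def, MeasureTheory.L2.inner_def]
  refine integral_congr_ae ?_
  filter_upwards [mulByLp_coeFn h hb (fourierLp 2 n), coeFn_fourierLp 2 n, coeFn_fourierLp 2 k,
    coeFn_fourierLp 2 (k - n)] with x h1 h2 h3 h4
  simp only [RCLike.inner_apply]
  rw [h1, h2, h3, h4]
  calc h x * fourier n x * (starRingEnd ℂ) (fourier k x)
      = (fourier (-k) x * fourier n x) * h x := by rw [fourier_neg]; ring
    _ = fourier (-k + n) x * h x := by rw [fourier_add]
    _ = h x * (starRingEnd ℂ) (fourier (k - n) x) := by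
        rw [show -k + n = -(k - n) by ring, fourier_neg]; ring

lemma mulByLp_mem_L2plus (h : L2T)
    (hb : ∀ᵐ z ∂(haarAddCircle : Measure UnitAddCircle), ‖h z‖ ≤ 1)
    (hmem : h ∈ L2plus) {f : L2T} (hf : f ∈ L2plus) : mulByLp h hb f ∈ L2plus := by
  intro m hm
  have hs := (fourierBasis.hasSum_repr f).mapL
    ((innerSL ℂ (fourierLp 2 m)).comp (mulByLp h hb))
  have hz : (fun k : ℤ => ((innerSL ℂ (fourierLp 2 m)).comp (mulByLp h hb))
      (fourierBasis.repr f k • fourierBasis k)) = fun _ => (0 : ℂ) := by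
    funext k
    have e1 : (fourierBasis k : L2T) = fourierLp 2 k := congrFun coe_fourierBasis k
    rw [_root_.map_smul, ContinuousLinearMap.comp_apply, innerSL_apply_apply, e1, smul_eq_mul]
    have e2 : ⟪(fourierLp 2 m : L2T), mulByLp h hb (fourierLp 2 k)⟫
        = fourierBasis.repr h (m - k) := by
      rw [← repr_mulByLp_fourierLp h hb k m, fourierBasis.repr_apply_apply, coe_fourierBasis]
    rw [e2]
    rcases lt_or_ge k 0 with hk | hk
    · rw [hf k hk, zero_mul]
    · rw [hmem (m - k) (by omega), mul_zero]
  rw [hz] at hs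
  have h0 := hs.unique hasSum_zero
  simp only [ContinuousLinearMap.comp_apply, innerSL_apply_apply] at h0
  rw [fourierBasis.repr_apply_apply, coe_fourierBasis]
  exact h0

lemma Mz_mem_L2plus {f : L2T} (hf : f ∈ L2plus) : Mz f ∈ L2plus := by
  intro m hm
  have hs := (fourierBasis.hasSum_repr f).mapL ((innerSL ℂ (fourierLp 2 m)).comp Mz)
  have hz : (fun k : ℤ => ((innerSL ℂ (fourierLp 2 m)).comp Mz)
      (fourierBasis.repr f k • fourierBasis k)) = fun _ => (0 : ℂ) := by
    funext k
    have e1 : (fourierBasis k : L2T) = fourierLp 2 k := congrFun coe_fourierBasis k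
    rw [_root_.map_smul, ContinuousLinearMap.comp_apply, innerSL_apply_apply, e1, smul_eq_mul,
      Mz_fourierLp]
    rcases lt_or_ge k 0 with hk | hk
    · rw [hf k hk, zero_mul]
    · rw [orthonormal_iff_ite.mp orthonormal_fourier m (k + 1), if_neg (by omega), mul_zero]
  rw [hz] at hs
  have h0 := hs.unique hasSum_zero
  simp only [ContinuousLinearMap.comp_apply, innerSL_apply_apply] at h0
  rw [fourierBasis.repr_apply_apply, coe_fourierBasis]
  exact h0

lemma oneT_eq : oneT = (fourierLp 2 (0 : ℤ) : L2T) := by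
  refine Lp.ext ?_
  filter_upwards [(memLp_const (1 : ℂ)).coeFn_toLp, coeFn_fourierLp 2 (0 : ℤ)] with x h1 h2
  rw [show ⇑oneT x = (1 : ℂ) from h1, h2, fourier_zero]

lemma oneT_mem_L2plus : oneT ∈ L2plus := by
  rw [oneT_eq]
  intro m hm
  rw [repr_fourierLp, if_neg (by omega)]

lemma mulByLp_oneT (h : L2T)
    (hb : ∀ᵐ z ∂(haarAddCircle : Measure UnitAddCircle), ‖h z‖ ≤ 1) :
    mulByLp h hb oneT = h := by
  refine Lp.ext ?_
  filter_upwards [mulByLp_coeFn h hb oneT, (memLp_const (1 : ℂ)).coeFn_toLp] with x h1 h2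
  rw [h1, show ⇑oneT x = (1 : ℂ) from h2, mul_one]

lemma h_mem_hL2plus (h : L2T)
    (hb : ∀ᵐ z ∂(haarAddCircle : Measure UnitAddCircle), ‖h z‖ ≤ 1) :
    h ∈ hL2plus h hb :=
  Submodule.mem_map.mpr ⟨oneT, oneT_mem_L2plus, mulByLp_oneT h hb⟩

lemma Mz_comm_mulByLp (h : L2T)
    (hb : ∀ᵐ z ∂(haarAddCircle : Measure UnitAddCircle), ‖h z‖ ≤ 1) (f : L2T) :
    Mz (mulByLp h hb f) = mulByLp h hb (Mz f) := by
  refine Lp.ext ?_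
  filter_upwards [Mz_coeFn (mulByLp h hb f), mulByLp_coeFn h hb f, mulByLp_coeFn h hb (Mz f),
    Mz_coeFn f] with x h1 h2 h3 h4
  rw [h1, h2, h3, h4]
  ring

lemma hL2plus_le_L2plus (h : L2T)
    (hb : ∀ᵐ z ∂(haarAddCircle : Measure UnitAddCircle), ‖h z‖ ≤ 1)
    (hmem : h ∈ L2plus) : hL2plus h hb ≤ L2plus := by
  rintro x hx
  obtain ⟨g, hg, rfl⟩ := Submodule.mem_map.mp hx
  exact mulByLp_mem_L2plus h hb hmem hg

lemma mem_K_of (h : L2T)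
    (hb : ∀ᵐ z ∂(haarAddCircle : Measure UnitAddCircle), ‖h z‖ ≤ 1)
    (hmem : h ∈ L2plus) {w : L2T} (hw1 : w ∈ L2plus) (hw2 : w ∈ (Hh h hb)ᗮ) :
    w ∈ (hL2plus h hb).topologicalClosure := by
  haveI : CompleteSpace ((hL2plus h hb).topologicalClosure) :=
    (Submodule.isClosed_topologicalClosure _).completeSpace_coe
  set K := (hL2plus h hb).topologicalClosure with hKdef
  have hw'K : w - ↑(K.orthogonalProjectionOnto w) ∈ Kᗮ :=
    Submodule.sub_starProjection_mem_orthogonal w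
  have hKle : K ≤ L2plus :=
    Submodule.topologicalClosure_minimal _ (hL2plus_le_L2plus h hb hmem) isClosed_L2plus
  have hw'plus : w - ↑(K.orthogonalProjectionOnto w) ∈ L2plus :=
    Submodule.sub_mem _ hw1 (hKle (K.orthogonalProjectionOnto w).2)
  have hw'orth : w - ↑(K.orthogonalProjectionOnto w) ∈ (hL2plus h hb)ᗮ := by
    rw [Submodule.mem_orthogonal]
    intro u hu
    exact (Submodule.mem_orthogonal _ _).mp hw'K u (Submodule.le_topologicalClosure _ hu)
  have hw'Hh : w - ↑(K.orthogonalProjectionOnto w) ∈ Hh h hb := ⟨hw'plus, hw'orth⟩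
  have h1 : ⟪w - ↑(K.orthogonalProjectionOnto w), w⟫ = 0 :=
    (Submodule.mem_orthogonal _ _).mp hw2 _ hw'Hh
  have h2 : ⟪w - ↑(K.orthogonalProjectionOnto w), (↑(K.orthogonalProjectionOnto w) : L2T)⟫ = 0 :=
    (Submodule.mem_orthogonal' _ _).mp hw'K _ (K.orthogonalProjectionOnto w).2
  have h3 : ⟪w - ↑(K.orthogonalProjectionOnto w), w - ↑(K.orthogonalProjectionOnto w)⟫ = 0 := by
    rw [inner_sub_right, h1, h2, sub_zero]
  have hw0 : w - ↑(K.orthogonalProjectionOnto w) = 0 := inner_self_eq_zero.mp h3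
  have : w = ↑(K.orthogonalProjectionOnto w) := by rwa [sub_eq_zero] at hw0
  rw [this]
  exact (K.orthogonalProjectionOnto w).2

lemma K_le_Hh_orth (h : L2T)
    (hb : ∀ᵐ z ∂(haarAddCircle : Measure UnitAddCircle), ‖h z‖ ≤ 1)
    {x : L2T} (hx : x ∈ (hL2plus h hb).topologicalClosure) : x ∈ (Hh h hb)ᗮ := by
  rw [Submodule.mem_orthogonal]
  intro g hg
  have hle : (hL2plus h hb).topologicalClosure ≤ LinearMap.ker (innerSL ℂ g : L2T →ₗ[ℂ] ℂ) := by
    refine Submodule.topologicalClosure_minimal _ ?_ (ContinuousLinearMap.isClosed_ker _)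
    intro u hu
    rw [LinearMap.mem_ker, ContinuousLinearMap.coe_coe, innerSL_apply_apply, ← inner_conj_symm,
      (Submodule.mem_orthogonal _ _).mp hg.2 u hu, map_zero]
  have := hle hx
  rw [LinearMap.mem_ker, ContinuousLinearMap.coe_coe, innerSL_apply_apply] at this
  exact this

lemma Mz_mem_K (h : L2T)
    (hb : ∀ᵐ z ∂(haarAddCircle : Measure UnitAddCircle), ‖h z‖ ≤ 1)
    (hmem : h ∈ L2plus) {x : L2T} (hx : x ∈ (hL2plus h hb).topologicalClosure) :
    Mz x ∈ (hL2plus h hb).topologicalClosure := by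
  have hle : (hL2plus h hb).topologicalClosure ≤
      Submodule.comap (Mz : L2T →ₗ[ℂ] L2T) (hL2plus h hb).topologicalClosure := by
    refine Submodule.topologicalClosure_minimal _ ?_ ?_
    · intro u hu
      rw [Submodule.mem_comap]
      obtain ⟨g, hg, rfl⟩ := Submodule.mem_map.mp hu
      refine Submodule.le_topologicalClosure _ ?_
      have : Mz (mulByLp h hb g) = mulByLp h hb (Mz g) := Mz_comm_mulByLp h hb g
      exact Submodule.mem_map.mpr ⟨Mz g, Mz_mem_L2plus hg, this.symm⟩
    · have : ((Submodule.comap (Mz : L2T →ₗ[ℂ] L2T)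
          (hL2plus h hb).topologicalClosure : Submodule ℂ L2T) : Set L2T)
          = ⇑Mz ⁻¹' ((hL2plus h hb).topologicalClosure : Set L2T) := rfl
      rw [this]
      exact (Submodule.isClosed_topologicalClosure _).preimage Mz.continuous
  exact Submodule.mem_comap.mp (hle hx)

lemma pow_phih (h : L2T)
    (hb : ∀ᵐ z ∂(haarAddCircle : Measure UnitAddCircle), ‖h z‖ ≤ 1)
    (hmem : h ∈ L2plus) (n : ℕ) :
    ((Ah h hb) ^ n) (phih h hb) = (Hh h hb).orthogonalProjectionOnto (fourierLp 2 (n : ℤ)) := by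
  induction n with
  | zero =>
    rw [pow_zero, ContinuousLinearMap.one_apply]
    show (Hh h hb).orthogonalProjectionOnto oneT = _
    rw [oneT_eq]
    norm_num
  | succ n ih =>
    rw [pow_succ', ContinuousLinearMap.mul_apply, ih]
    have hA : ∀ x : ↥(Hh h hb), Ah h hb x = (Hh h hb).orthogonalProjectionOnto (Mz ↑x) :=
      fun x => rfl
    rw [hA]
    set u : L2T := fourierLp 2 (n : ℤ) with hu_def
    have hu : u ∈ L2plus := fourierLp_mem_L2plus n
    have hPu : (↑((Hh h hb).orthogonalProjectionOnto u) : L2T) ∈ L2plus :=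
      ((Hh h hb).orthogonalProjectionOnto u).2.1
    have hwK : u - ↑((Hh h hb).orthogonalProjectionOnto u) ∈ (hL2plus h hb).topologicalClosure :=
      mem_K_of h hb hmem (Submodule.sub_mem _ hu hPu)
        (Submodule.sub_starProjection_mem_orthogonal u)
    have hMzw : (Hh h hb).orthogonalProjectionOnto
        (Mz (u - ↑((Hh h hb).orthogonalProjectionOnto u))) = 0 :=
      Submodule.orthogonalProjectionOnto_apply_of_mem_orthogonal
        (K_le_Hh_orth h hb (Mz_mem_K h hb hmem hwK))
    have hsplit : Mz (↑((Hh h hb).orthogonalProjectionOnto u) : L2T)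
        = fourierLp 2 ((n : ℤ) + 1) - Mz (u - ↑((Hh h hb).orthogonalProjectionOnto u)) := by
      rw [map_sub, hu_def, Mz_fourierLp]
      abel
    rw [hsplit, map_sub, hMzw, sub_zero]
    have : ((n : ℤ) + 1) = ((n + 1 : ℕ) : ℤ) := by push_cast; ring
    rw [this]

lemma natCast_int_injective : Function.Injective ((↑) : ℕ → ℤ) :=
  fun a b hab => by exact_mod_cast hab

lemma parseval_frame (h : L2T)
    (hb : ∀ᵐ z ∂(haarAddCircle : Measure UnitAddCircle), ‖h z‖ ≤ 1)
    (hmem : h ∈ L2plus) (f : ↥(Hh h hb)) :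
    ∑' n : ℕ, ‖(inner ℂ f (((Ah h hb) ^ n) (phih h hb)) : ℂ)‖ ^ 2 = ‖f‖ ^ 2 := by
  have key : ∀ n : ℕ, ‖(inner ℂ f (((Ah h hb) ^ n) (phih h hb)) : ℂ)‖
      = ‖fourierBasis.repr (↑f : L2T) (n : ℤ)‖ := by
    intro n
    rw [pow_phih h hb hmem n, Submodule.coe_inner,
      ← Submodule.starProjection_apply, ← Submodule.inner_starProjection_left_eq_right,
      Submodule.starProjection_eq_self_iff.mpr f.2, norm_inner_symm,
      fourierBasis.repr_apply_apply, coe_fourierBasis]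
  calc ∑' n : ℕ, ‖(inner ℂ f (((Ah h hb) ^ n) (phih h hb)) : ℂ)‖ ^ 2
      = ∑' n : ℕ, ‖fourierBasis.repr (↑f : L2T) ((n : ℕ) : ℤ)‖ ^ 2 :=
        tsum_congr fun n => by rw [key n]
    _ = ∑' k : ℤ, ‖fourierBasis.repr (↑f : L2T) k‖ ^ 2 := by
        refine natCast_int_injective.tsum_eq
          (f := fun k : ℤ => ‖fourierBasis.repr (↑f : L2T) k‖ ^ 2) ?_
        intro k hk
        by_contra hc
        rcases lt_or_ge k 0 with hneg | hpos
        · refine hk ?_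
          show ‖fourierBasis.repr (↑f : L2T) k‖ ^ 2 = 0
          rw [f.2.1 k hneg]
          simp
        · exact hc ⟨k.toNat, Int.toNat_of_nonneg hpos⟩
    _ = ‖f‖ ^ 2 := by
        have H1 : ‖fourierBasis.repr (↑f : L2T)‖ ^ 2
            = ∑' k : ℤ, ‖fourierBasis.repr (↑f : L2T) k‖ ^ 2 := by
          apply_mod_cast lp.norm_rpow_eq_tsum ?_ (fourierBasis.repr (↑f : L2T))
          norm_num
        have H2 : ‖fourierBasis.repr (↑f : L2T)‖ = ‖(↑f : L2T)‖ := by simp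
        rw [← H1, H2, Submodule.norm_coe]

lemma not_rieszBasis (h : L2T)
    (hb : ∀ᵐ z ∂(haarAddCircle : Measure UnitAddCircle), ‖h z‖ ≤ 1)
    (hmem : h ∈ L2plus)
    (hinner : ∀ᵐ z ∂(haarAddCircle : Measure UnitAddCircle), ‖h z‖ = 1) :
    ¬ IsRieszBasis fun n : ℕ => ((Ah h hb) ^ n) (phih h hb) := by
  rintro ⟨ε, V, hV⟩
  have hPh : (Hh h hb).orthogonalProjectionOnto h = 0 := by
    apply Submodule.orthogonalProjectionOnto_apply_of_mem_orthogonal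
    rw [Submodule.mem_orthogonal]
    intro g hg
    rw [← inner_conj_symm, (Submodule.mem_orthogonal _ _).mp hg.2 h (h_mem_hL2plus h hb),
      map_zero]
  have hs0 : HasSum (fun k : ℤ => fourierBasis.repr h k • (fourierLp 2 k : L2T)) h := by
    have := fourierBasis.hasSum_repr h
    rwa [coe_fourierBasis] at this
  have hsN : HasSum (fun n : ℕ => fourierBasis.repr h ((n : ℕ) : ℤ)
      • (fourierLp 2 ((n : ℕ) : ℤ) : L2T)) h := by
    refine (Function.Injective.hasSum_iff (f := fun k : ℤ =>
      fourierBasis.repr h k • (fourierLp 2 k : L2T)) natCast_int_injective ?_).mpr hs0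
    intro k hk
    have hkneg : k < 0 := by
      by_contra hpos
      push_neg at hpos
      exact hk ⟨k.toNat, Int.toNat_of_nonneg hpos⟩
    show fourierBasis.repr h k • (fourierLp 2 k : L2T) = 0
    rw [hmem k hkneg, zero_smul]
  have hs1 := hsN.mapL ((Hh h hb).orthogonalProjectionOnto)
  rw [hPh] at hs1
  have hfun : (fun n : ℕ => (Hh h hb).orthogonalProjectionOnto
      (fourierBasis.repr h ((n : ℕ) : ℤ) • (fourierLp 2 ((n : ℕ) : ℤ) : L2T)))
      = fun n : ℕ => fourierBasis.repr h ((n : ℕ) : ℤ) • V (ε n) := by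
    funext n
    rw [_root_.map_smul, ← pow_phih h hb hmem n]
    exact congrArg (fun t => fourierBasis.repr h ((n : ℕ) : ℤ) • t) (hV n)
  rw [hfun] at hs1
  have hs2 : HasSum (fun n : ℕ => fourierBasis.repr h ((n : ℕ) : ℤ) • (ε n)) 0 := by
    have := hs1.mapL (V.symm : ↥(Hh h hb) →L[ℂ] ↥(Hh h hb))
    simp only [_root_.map_smul, ContinuousLinearEquiv.coe_coe,
      ContinuousLinearEquiv.symm_apply_apply, map_zero] at this
    exact this
  have hc : ∀ m : ℕ, fourierBasis.repr h ((m : ℕ) : ℤ) = 0 := by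
    intro m
    have h3 := hs2.mapL (innerSL ℂ (ε m))
    simp only [_root_.map_smul, innerSL_apply_apply, map_zero, smul_eq_mul] at h3
    have h4 : (fun n : ℕ => fourierBasis.repr h ((n : ℕ) : ℤ)
        * (inner ℂ (ε m) (ε n) : ℂ))
        = fun n : ℕ => if n = m then fourierBasis.repr h ((m : ℕ) : ℤ) else 0 := by
      funext n
      rw [orthonormal_iff_ite.mp ε.orthonormal m n]
      by_cases hnm : n = m
      · subst hnm; simp
      · simp [hnm, Ne.symm hnm]
    rw [h4] at h3
    exact ((hasSum_ite_eq m _).unique h3)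
  have hrepr : fourierBasis.repr h = 0 := by
    apply lp.ext
    funext k
    simp only [lp.coeFn_zero, Pi.zero_apply]
    rcases lt_or_ge k 0 with hneg | hpos
    · exact hmem k hneg
    · have : k = ((k.toNat : ℕ) : ℤ) := (Int.toNat_of_nonneg hpos).symm
      rw [this]
      exact hc k.toNat
  have hh0 : h = 0 := (LinearIsometryEquiv.map_eq_zero_iff _).mp hrepr
  have hz : ⇑h =ᵐ[(haarAddCircle : Measure UnitAddCircle)] 0 := by
    rw [hh0]
    exact Lp.coeFn_zero ℂ 2 _
  haveI : Filter.NeBot (MeasureTheory.ae (haarAddCircle : Measure UnitAddCircle)) :=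
    ae_neBot.mpr (IsProbabilityMeasure.ne_zero _)
  obtain ⟨z, hz1, hz2⟩ := (hinner.and hz).exists
  rw [show h z = (0 : ℂ) from hz2, norm_zero] at hz1
  exact zero_ne_one hz1

end AuxProofs

/-- For an inner function `h`, one has `A_hⁿ φ_h = P_{H_h}(zⁿ)` for all `n ∈ ℕ`;
consequently `(A_hⁿ φ_h)_{n∈ℕ}` is a Parseval frame for `H_h`, which is overcomplete
whenever `H_h` is infinite-dimensional. -/
theorem Ah_orbit_parseval
    (h : L2T) (hb : ∀ᵐ z ∂(haarAddCircle : Measure UnitAddCircle), ‖h z‖ ≤ 1)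
    (hmem : h ∈ L2plus)
    (hinner : ∀ᵐ z ∂(haarAddCircle : Measure UnitAddCircle), ‖h z‖ = 1) :
    (∀ n : ℕ, ((Ah h hb) ^ n) (phih h hb) =
      (Hh h hb).orthogonalProjectionOnto (fourierLp 2 (n : ℤ))) ∧
    (∀ f : ↥(Hh h hb),
      ∑' n : ℕ, ‖(inner ℂ f (((Ah h hb) ^ n) (phih h hb)) : ℂ)‖ ^ 2 = ‖f‖ ^ 2) ∧
    (¬ FiniteDimensional ℂ ↥(Hh h hb) →
      ¬ IsRieszBasis fun n : ℕ => ((Ah h hb) ^ n) (phih h hb)) :=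
  ⟨pow_phih h hb hmem, parseval_frame h hb hmem, fun _ => not_rieszBasis h hb hmem hinner⟩
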